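/- In a 2-connected graph G with colouring f, the minimum size of an f-respecting simultaneous dominating set equals |f⁻¹(1)| plus the minimum size of a vertex cover of the graph obtained from G by deleting all vertices of colour 1 and all edges joining two vertices of colour 0. -/

import Mathlib

open SimpleGraph

variable {V : Type*}

/-- Number of connected components of a graph. -/
noncomputable def numComponents (G : SimpleGraph V) : ℕ := Nat.card G.ConnectedComponent

/-- A vertex is a cut vertex if its removal increases the number of connected components. -/
def IsCutVertex (G : SimpleGraph V) (v : V) : Prop :=
  numComponents G < numComponents (G.induce {u | u ≠ v})

/-- `T` is a spanning tree of `G`: a subgraph on all vertices of `G` that is a tree. -/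
def IsSpanningTree (G T : SimpleGraph V) : Prop := T ≤ G ∧ T.IsTree

/-- `v` is dominated by `S` in the graph `T`. -/
def DominatedIn (T : SimpleGraph V) (S : Set V) (v : V) : Prop :=
  v ∈ S ∨ ∃ u ∈ S, T.Adj v u

/-- `v` is simultaneously dominated by `S`: dominated in every spanning tree of `G`. -/
def SimDominated (G : SimpleGraph V) (S : Set V) (v : V) : Prop :=
  ∀ T : SimpleGraph V, IsSpanningTree G T → DominatedIn T S v

/-- `S` is a simultaneous dominating set of `G`. -/
def IsSDSet (G : SimpleGraph V) (S : Set V) : Prop := ∀ v, SimDominated G S v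

/-- `C` is a vertex cover of `G`. -/
def IsVertexCover (G : SimpleGraph V) (C : Set V) : Prop :=
  ∀ ⦃u v : V⦄, G.Adj u v → u ∈ C ∨ v ∈ C

/-- A block of `G`: a maximal vertex set inducing a connected subgraph without cut vertices. -/
def IsBlock (G : SimpleGraph V) (B : Set V) : Prop :=
  B.Nonempty ∧ (G.induce B).Connected ∧ (∀ x, ¬ IsCutVertex (G.induce B) x) ∧
    ∀ B' : Set V, B ⊆ B' → (G.induce B').Connected →
      (∀ x, ¬ IsCutVertex (G.induce B') x) → B' = B

/-- 2-connected: connected, at least 3 vertices, no cut vertex. -/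
def TwoConnected (G : SimpleGraph V) [Fintype V] : Prop :=
  G.Connected ∧ 3 ≤ Fintype.card V ∧ ∀ v, ¬ IsCutVertex G v

/-- Colours 1, 0, 0̂. -/
inductive Col : Type
  | one | zero | zhat
deriving DecidableEq

/-- `S` is an `f`-respecting simultaneous dominating set of `G`. -/
def RespSDS (G : SimpleGraph V) (f : V → Col) (S : Set V) : Prop :=
  (∀ v, f v = Col.one → v ∈ S) ∧ ∀ v, f v = Col.zhat → SimDominated G S v

/-- A minimum `f`-respecting simultaneous dominating set. -/
def MinRespSDS (G : SimpleGraph V) (f : V → Col) (S : Set V) : Prop :=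
  RespSDS G f S ∧ ∀ S' : Set V, RespSDS G f S' → S.ncard ≤ S'.ncard

/-- The graph `(G − f⁻¹(1)) − E(G[f⁻¹(0)])`: delete all vertices of colour 1 (keeping them as
isolated vertices) and all edges between two vertices of colour 0. -/
def Gminus (G : SimpleGraph V) (f : V → Col) : SimpleGraph V where
  Adj u w := G.Adj u w ∧ f u ≠ Col.one ∧ f w ≠ Col.one ∧ ¬(f u = Col.zero ∧ f w = Col.zero)
  symm := ⟨fun u w ⟨h, h1, h2, h3⟩ => ⟨h.symm, h2, h1, fun ⟨a, b⟩ => h3 ⟨b, a⟩⟩⟩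
  loopless := ⟨fun u h => G.loopless.irrefl u h.1⟩

lemma exists_spanning_tree' [Fintype V] :
    ∀ (n : ℕ) (G : SimpleGraph V), G.edgeSet.ncard = n → G.Connected →
      ∃ T : SimpleGraph V, T ≤ G ∧ T.IsTree := by
  intro n
  induction n using Nat.strong_induction_on with
  | _ n ih =>
    intro G hn hc
    by_cases hac : G.IsAcyclic
    · exact ⟨G, le_refl _, ⟨hc, hac⟩⟩
    · rw [isAcyclic_iff_forall_adj_isBridge] at hac
      push_neg at hac
      obtain ⟨v, w, hvw, hbr⟩ := hac
      rw [SimpleGraph.isBridge_iff] at hbr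
      push_neg at hbr
      have hreach : (G \ fromEdgeSet {s(v, w)}).Reachable v w := hbr
      set G' := G \ fromEdgeSet {s(v, w)} with hG'
      have hle : G' ≤ G := sdiff_le
      have hstep : ∀ {a b : V}, G.Walk a b → G'.Reachable a b := by
        intro a b p
        induction p with
        | nil => exact Reachable.refl _
        | @cons a c b h q ihq =>
          refine Reachable.trans ?_ ihq
          by_cases he : s(a, c) = s(v, w)
          · rw [Sym2.eq_iff] at he
            rcases he with ⟨rfl, rfl⟩ | ⟨rfl, rfl⟩
            · exact hreach
            · exact hreach.symm
          · refine Adj.reachable ?_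
            rw [hG', sdiff_adj]
            refine ⟨h, ?_⟩
            rw [fromEdgeSet_adj]
            rintro ⟨hmem, -⟩
            exact he hmem
      have hpre : G'.Preconnected := fun a b => hstep ((hc.preconnected a b).some)
      have hc' : G'.Connected := by
        haveI := hc.nonempty
        exact ⟨hpre⟩
      have hlt : G'.edgeSet.ncard < n := by
        rw [← hn]
        refine Set.ncard_lt_ncard ?_ (Set.toFinite _)
        constructor
        · exact SimpleGraph.edgeSet_mono hle
        · intro hsub
          have : s(v, w) ∈ G'.edgeSet := hsub hvw
          rw [SimpleGraph.mem_edgeSet, hG', sdiff_adj, fromEdgeSet_adj] at this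
          exact this.2 ⟨rfl, hvw.ne⟩
      obtain ⟨T, hT1, hT2⟩ := ih _ hlt G' rfl hc'
      exact ⟨T, le_trans hT1 hle, hT2⟩



lemma numComponents_eq_one [Fintype V] {G : SimpleGraph V} (h : G.Connected) :
    numComponents G = 1 := by
  rw [numComponents, Nat.card_eq_one_iff_unique]
  constructor
  · constructor
    intro a b
    refine ConnectedComponent.ind₂ (fun x y => ?_) a b
    exact ConnectedComponent.sound (h.preconnected x y)
  · obtain ⟨x⟩ := h.nonempty
    exact ⟨G.connectedComponentMk x⟩

lemma induce_connected_of_twoConnected [Fintype V] {G : SimpleGraph V}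
    (hG : TwoConnected G) (v : V) : (G.induce {u | u ≠ v}).Connected := by
  obtain ⟨hc, hcard, hcut⟩ := hG
  have hne : Nonempty ({u | u ≠ v} : Set V) := by
    obtain ⟨w, hw⟩ := Fintype.exists_ne_of_one_lt_card (by omega) v
    exact ⟨⟨w, hw⟩⟩
  have h1 : numComponents (G.induce {u | u ≠ v}) ≤ 1 := by
    have := hcut v
    rw [IsCutVertex, not_lt, numComponents_eq_one hc] at this
    exact this
  have h2 : 1 ≤ numComponents (G.induce {u | u ≠ v}) := by
    rw [numComponents]
    haveI : Nonempty (G.induce {u | u ≠ v}).ConnectedComponent := by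
      obtain ⟨a⟩ := hne
      exact ⟨(G.induce {u | u ≠ v}).connectedComponentMk a⟩
    haveI : Finite (G.induce {u | u ≠ v}).ConnectedComponent := Quot.finite _
    exact Nat.one_le_iff_ne_zero.mpr (Nat.card_ne_zero.mpr ⟨inferInstance, inferInstance⟩)
  have hone : numComponents (G.induce {u | u ≠ v}) = 1 := le_antisymm h1 h2
  rw [numComponents, Nat.card_eq_one_iff_unique] at hone
  haveI := hone.1
  haveI := hne
  exact ⟨fun a b => ConnectedComponent.exact (Subsingleton.elim _ _)⟩

def delV (G : SimpleGraph V) (v : V) : SimpleGraph V where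
  Adj a b := G.Adj a b ∧ a ≠ v ∧ b ≠ v
  symm := ⟨fun a b ⟨h, h1, h2⟩ => ⟨h.symm, h2, h1⟩⟩
  loopless := ⟨fun a ⟨h, _, _⟩ => G.loopless.irrefl a h⟩

lemma key_lemma [Fintype V] {G : SimpleGraph V} (hG : TwoConnected G) (S : Set V) (v : V) :
    SimDominated G S v ↔ v ∈ S ∨ ∀ u, G.Adj v u → u ∈ S := by
  constructor
  · -- forward: contrapose
    intro hsd
    by_contra hcon
    push_neg at hcon
    obtain ⟨hvS, u, hadj, huS⟩ := hcon
    have hvu : v ≠ u := G.ne_of_adj hadj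
    -- build H = delV G v ⊔ single edge vu
    set H : SimpleGraph V := delV G v ⊔ fromEdgeSet {s(v, u)} with hH
    have hHle : H ≤ G := by
      rw [hH]
      refine sup_le (fun a b h => h.1) ?_
      intro a b h
      rw [fromEdgeSet_adj] at h
      obtain ⟨hm, hne⟩ := h
      rw [Set.mem_singleton_iff, Sym2.eq_iff] at hm
      rcases hm with ⟨rfl, rfl⟩ | ⟨rfl, rfl⟩
      · exact hadj
      · exact hadj.symm
    have hHuv : H.Adj u v := by
      rw [hH, sup_adj, fromEdgeSet_adj]
      right
      exact ⟨by rw [Set.mem_singleton_iff, Sym2.eq_iff]; right; exact ⟨rfl, rfl⟩, fun h => hvu h.symm⟩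
    have hHconn : H.Connected := by
      have hic := induce_connected_of_twoConnected hG v
      have hstep : ∀ a : V, a ≠ v → H.Reachable a u := by
        intro a ha
        have hu' : u ≠ v := fun h => hvu h.symm
        let φ : G.induce {x | x ≠ v} →g H := by
          refine ⟨Subtype.val, ?_⟩
          intro x y hxy
          rw [hH, sup_adj]
          left
          exact ⟨hxy, x.2, y.2⟩
        obtain ⟨p⟩ := hic.preconnected ⟨a, ha⟩ ⟨u, hu'⟩
        exact (p.map φ).reachable
      have hpre : H.Preconnected := by
        have hav : ∀ a : V, H.Reachable a v := by
          intro a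
          by_cases ha : a = v
          · subst ha; exact Reachable.refl _
          · exact (hstep a ha).trans hHuv.reachable
        intro a b
        exact (hav a).trans (hav b).symm
      haveI := hG.1.nonempty
      exact ⟨hpre⟩
    obtain ⟨T, hTH, hTtree⟩ := exists_spanning_tree' _ H rfl hHconn
    have hTG : IsSpanningTree G T := ⟨le_trans hTH hHle, hTtree⟩
    have := hsd T hTG
    rcases this with h | ⟨b, hbS, hTb⟩
    · exact hvS h
    · have hHb : H.Adj v b := hTH hTb
      rw [hH, sup_adj] at hHb
      rcases hHb with ⟨_, h2, _⟩ | hfe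
      · exact h2 rfl
      · rw [fromEdgeSet_adj, Set.mem_singleton_iff, Sym2.eq_iff] at hfe
        rcases hfe.1 with ⟨-, rfl⟩ | ⟨hvu', -⟩
        · exact huS hbS
        · exact hvu hvu'
  · -- backward
    rintro (hvS | hN) T ⟨hle, htree⟩
    · exact Or.inl hvS
    · have h3 := hG.2.1
      obtain ⟨w, hw⟩ := Fintype.exists_ne_of_one_lt_card (by omega) v
      obtain ⟨p⟩ := htree.isConnected.preconnected v w
      cases p with
      | nil => exact absurd rfl hw
      | cons h q => exact Or.inr ⟨_, hN _ (hle h), h⟩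


/-- In a 2-connected graph `G` with colouring `f`, the minimum size of an
`f`-respecting SD-set equals `|f⁻¹(1)|` plus the minimum size of a vertex cover of
`(G − f⁻¹(1)) − E(G[f⁻¹(0)])`. -/
theorem stmt12 [Fintype V] (G : SimpleGraph V) (hG : TwoConnected G) (f : V → Col) :
    sInf {n : ℕ | ∃ S : Set V, RespSDS G f S ∧ S.ncard = n} =
      (f ⁻¹' {Col.one}).ncard +
        sInf {n : ℕ | ∃ C : Set V, _root_.IsVertexCover (Gminus G f) C ∧ C.ncard = n} := by
  classical
  set one : Set V := f ⁻¹' {Col.one} with hone_def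
  have hAne : {n : ℕ | ∃ S : Set V, RespSDS G f S ∧ S.ncard = n}.Nonempty :=
    ⟨(Set.univ : Set V).ncard, Set.univ,
      ⟨fun v _ => trivial, fun v _ T _ => Or.inl trivial⟩, rfl⟩
  have hBne : {n : ℕ | ∃ C : Set V, _root_.IsVertexCover (Gminus G f) C ∧ C.ncard = n}.Nonempty :=
    ⟨(Set.univ : Set V).ncard, Set.univ, fun a b _ => Or.inl trivial, rfl⟩
  apply le_antisymm
  · obtain ⟨C, hC, hCcard⟩ := Nat.sInf_mem hBne
    set C' : Set V := C \ one with hC'def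
    have hSresp : RespSDS G f (one ∪ C') := by
      constructor
      · intro v hv
        exact Or.inl (by simp [hone_def, hv])
      · intro v hv
        rw [key_lemma hG]
        by_cases hvS : v ∈ one ∪ C'
        · exact Or.inl hvS
        · refine Or.inr fun u hu => ?_
          by_cases hu1 : f u = Col.one
          · exact Or.inl (by simp [hone_def, hu1])
          · have hadj : (Gminus G f).Adj v u := by
              refine ⟨hu, ?_, hu1, ?_⟩
              · simp [hv]
              · rintro ⟨hv0, -⟩
                rw [hv] at hv0
                exact Col.noConfusion hv0
            rcases hC hadj with h | h
            · exact absurd (Or.inr ⟨h, by simp [hone_def, hv]⟩) hvS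
            · exact Or.inr ⟨h, by simp [hone_def, hu1]⟩
    calc sInf {n : ℕ | ∃ S : Set V, RespSDS G f S ∧ S.ncard = n} ≤ (one ∪ C').ncard :=
          Nat.sInf_le ⟨one ∪ C', hSresp, rfl⟩
      _ = one.ncard + C'.ncard := by
          rw [Set.ncard_union_eq (Set.disjoint_sdiff_right) (Set.toFinite _) (Set.toFinite _)]
      _ ≤ one.ncard + C.ncard :=
          Nat.add_le_add_left (Set.ncard_le_ncard Set.diff_subset (Set.toFinite _)) _
      _ = one.ncard + sInf {n : ℕ | ∃ C : Set V, _root_.IsVertexCover (Gminus G f) C ∧ C.ncard = n} := by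
          rw [hCcard]
  · obtain ⟨S, hS, hScard⟩ := Nat.sInf_mem hAne
    have honeS : one ⊆ S := by
      intro x hx
      exact hS.1 x (by simpa [hone_def] using hx)
    have hcov : _root_.IsVertexCover (Gminus G f) (S \ one) := by
      rintro a b ⟨hGab, h1, h2, h3⟩
      have hmem : a ∈ S ∨ b ∈ S := by
        have hz : f a = Col.zhat ∨ f b = Col.zhat := by
          cases ha' : f a <;> cases hb' : f b <;> simp_all
        rcases hz with hz | hz
        · rcases (key_lemma hG S a).mp (hS.2 a hz) with h | h
          · exact Or.inl h
          · exact Or.inr (h b hGab)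
        · rcases (key_lemma hG S b).mp (hS.2 b hz) with h | h
          · exact Or.inr h
          · exact Or.inl (h a hGab.symm)
      rcases hmem with h | h
      · exact Or.inl ⟨h, by simp [hone_def, h1]⟩
      · exact Or.inr ⟨h, by simp [hone_def, h2]⟩
    calc one.ncard + sInf {n : ℕ | ∃ C : Set V, _root_.IsVertexCover (Gminus G f) C ∧ C.ncard = n}
        ≤ one.ncard + (S \ one).ncard := by
          have hb : sInf {n : ℕ | ∃ C : Set V, _root_.IsVertexCover (Gminus G f) C ∧ C.ncard = n} ≤
              (S \ one).ncard := Nat.sInf_le ⟨S \ one, hcov, rfl⟩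
          omega
      _ = S.ncard := by
          rw [← Set.ncard_union_eq (Set.disjoint_sdiff_right) (Set.toFinite _) (Set.toFinite _),
            Set.union_diff_cancel honeS]
      _ = sInf {n : ℕ | ∃ S : Set V, RespSDS G f S ∧ S.ncard = n} := hScard
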